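/- Let x : (a,b) → ℓ²(ℝ) be a differentiable curve with values in 𝒰 (i.e. ‖x(t)‖_{ℓ²} = 1 and x_n(t) > 0 for all n, t). Define p(t) := (x_n(t)²). Then p(t) ∈ Δ for all t, p is a differentiable curve into ℓ¹ with derivative v(t) = (2 x_n(t) x_n'(t)), the sequence (v_n(t)/√p_n(t)) lies in ℓ², and the ℓ²-Fisher–Rao energy equals the spherical energy: (1/4)∑_{n=0}^∞ v_n(t)²/p_n(t) = ‖x'(t)‖_{ℓ²}² for every t. (This is the infinitesimal form of the statement that the square-root map Φ : (Δ, G^{FR}) → (𝒰, ℓ²-metric) is an isometry.) -/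

import Mathlib

open scoped ENNReal

/-- The absolute value of an `ℓ²` sequence, as an `ℓ²` element. -/
noncomputable def absLp (f : lp (fun _ : ℕ => ℝ) 2) : lp (fun _ : ℕ => ℝ) 2 :=
  ⟨fun n => |f n|, by
    apply memℓp_gen
    have := (lp.memℓp f).summable (by norm_num : (0:ℝ) < (2:ℝ≥0∞).toReal)
    simpa [Real.norm_eq_abs, abs_abs] using this⟩

@[simp] lemma absLp_apply (f : lp (fun _ : ℕ => ℝ) 2) (n : ℕ) : absLp f n = |f n| := rfl

lemma absLp_norm (f : lp (fun _ : ℕ => ℝ) 2) : ‖absLp f‖ = ‖f‖ := by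
  have h1 := lp.norm_rpow_eq_tsum (by norm_num : (0:ℝ) < (2:ℝ≥0∞).toReal) (absLp f)
  have h2 := lp.norm_rpow_eq_tsum (by norm_num : (0:ℝ) < (2:ℝ≥0∞).toReal) f
  norm_num at h1 h2
  have h3 := h1.trans h2.symm
  have := congrArg Real.sqrt h3
  simpa [Real.sqrt_sq (norm_nonneg _)] using this

/-- Cauchy–Schwarz for `ℓ²` sequences, absolute-value form. -/
lemma cs (f g : lp (fun _ : ℕ => ℝ) 2) :
    Summable (fun n => ‖f n * g n‖) ∧ ∑' n, ‖f n * g n‖ ≤ ‖f‖ * ‖g‖ := by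
  have hs := lp.hasSum_inner (𝕜 := ℝ) (absLp f) (absLp g)
  have hco : (fun i => (inner ℝ (absLp f i) (absLp g i) : ℝ)) = fun n => ‖f n * g n‖ := by
    funext n; simp [RCLike.inner_apply, Real.norm_eq_abs, abs_mul, mul_comm]
  rw [hco] at hs
  refine ⟨hs.summable, ?_⟩
  rw [hs.tsum_eq]
  calc (inner ℝ (absLp f) (absLp g) : ℝ) ≤ ‖absLp f‖ * ‖absLp g‖ := real_inner_le_norm _ _
    _ = ‖f‖ * ‖g‖ := by rw [absLp_norm, absLp_norm]

lemma mem_mul (f g : lp (fun _ : ℕ => ℝ) 2) : Memℓp (fun n => f n * g n) 1 := by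
  apply memℓp_gen
  simpa using (cs f g).1

/-- Pointwise product of two `ℓ²` sequences, as an `ℓ¹` element. -/
noncomputable def mulFun (f g : lp (fun _ : ℕ => ℝ) 2) : lp (fun _ : ℕ => ℝ) 1 :=
  ⟨fun n => f n * g n, mem_mul f g⟩

@[simp] lemma mulFun_apply (f g : lp (fun _ : ℕ => ℝ) 2) (n : ℕ) :
    mulFun f g n = f n * g n := rfl

lemma mulFun_norm (f g : lp (fun _ : ℕ => ℝ) 2) : ‖mulFun f g‖ ≤ 1 * ‖f‖ * ‖g‖ := by
  have h := lp.norm_rpow_eq_tsum (p := 1) (by norm_num) (mulFun f g)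
  norm_num at h
  rw [h]
  simpa using (cs f g).2

/-- Pointwise multiplication `ℓ² × ℓ² → ℓ¹` as a continuous bilinear map. -/
noncomputable def mulCLM :
    lp (fun _ : ℕ => ℝ) 2 →L[ℝ] lp (fun _ : ℕ => ℝ) 2 →L[ℝ] lp (fun _ : ℕ => ℝ) 1 :=
  LinearMap.mkContinuous₂
    (LinearMap.mk₂ ℝ mulFun
      (fun f f' g => by apply lp.ext; funext n; simp [mul_add, add_mul])
      (fun c f g => by apply lp.ext; funext n; simp [mul_assoc])
      (fun f g g' => by apply lp.ext; funext n; simp [mul_add])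
      (fun c f g => by apply lp.ext; funext n; simp; ring))
    1 mulFun_norm

@[simp] lemma mulCLM_apply (f g : lp (fun _ : ℕ => ℝ) 2) (n : ℕ) :
    mulCLM f g n = f n * g n := rfl

/-- The ℓ²-probability simplex `Δ`. -/
def simplex : Set (ℕ → ℝ) :=
  {p | Summable p ∧ (∀ n, 0 < p n) ∧ ∑' n, p n = 1}

/-- if `x : (a,b) → ℓ²(ℝ)` is a differentiable curve with values in `𝒰`
(unit sphere, strictly positive coordinates) and `p(t) := (x_n(t)²)`, then
`p(t) ∈ Δ`, `p` is a differentiable curve into `ℓ¹` with derivative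
`v(t) = (2 x_n(t) x_n'(t))`, the sequence `(v_n(t)/√p_n(t))` lies in `ℓ²`, and the
ℓ²-Fisher–Rao energy equals the spherical energy:
`(1/4)∑ v_n(t)²/p_n(t) = ‖x'(t)‖²_{ℓ²}`. -/
theorem squareRootMap_isometry_infinitesimal (a b : ℝ)
    (x x' : ℝ → lp (fun _ : ℕ => ℝ) 2)
    (hderiv : ∀ t ∈ Set.Ioo a b, HasDerivAt x (x' t) t)
    (hpos : ∀ t ∈ Set.Ioo a b, ∀ n, 0 < x t n)
    (hsph : ∀ t ∈ Set.Ioo a b, ∑' n, (x t n) ^ 2 = 1) :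
    (∀ t ∈ Set.Ioo a b, (fun n => (x t n) ^ 2) ∈ simplex) ∧
    (∃ P : ℝ → lp (fun _ : ℕ => ℝ) 1,
      (∀ t ∈ Set.Ioo a b, ∀ n : ℕ, P t n = (x t n) ^ 2) ∧
      (∀ t ∈ Set.Ioo a b, ∃ V : lp (fun _ : ℕ => ℝ) 1,
        (∀ n : ℕ, V n = 2 * x t n * x' t n) ∧ HasDerivAt P V t)) ∧
    (∀ t ∈ Set.Ioo a b,
      Summable (fun n => (2 * x t n * x' t n / Real.sqrt ((x t n) ^ 2)) ^ 2)) ∧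
    (∀ t ∈ Set.Ioo a b,
      (1 / 4) * ∑' n, (2 * x t n * x' t n) ^ 2 / (x t n) ^ 2 = ‖x' t‖ ^ 2) := by
  have hsum2 : ∀ f : lp (fun _ : ℕ => ℝ) 2, Summable (fun n => (f n) ^ 2) := by
    intro f
    have := (lp.memℓp f).summable (by norm_num : (0:ℝ) < (2:ℝ≥0∞).toReal)
    simpa [Real.norm_eq_abs, Real.rpow_natCast, sq_abs] using this
  have hnorm2 : ∀ f : lp (fun _ : ℕ => ℝ) 2, ‖f‖ ^ 2 = ∑' n, (f n) ^ 2 := by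
    intro f
    have := lp.norm_rpow_eq_tsum (by norm_num : (0:ℝ) < (2:ℝ≥0∞).toReal) f
    norm_num at this
    simpa using this
  refine ⟨?_, ?_, ?_, ?_⟩
  · intro t ht
    exact ⟨hsum2 (x t), fun n => pow_pos (hpos t ht n) 2, hsph t ht⟩
  · refine ⟨fun t => mulCLM (x t) (x t), ?_, ?_⟩
    · intro t ht n; simp [sq]
    · intro t ht
      refine ⟨mulCLM (x t) (x' t) + mulCLM (x' t) (x t), ?_, ?_⟩
      · intro n
        simp only [lp.coeFn_add, Pi.add_apply, mulCLM_apply]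
        ring
      · exact mulCLM.hasDerivAt_of_bilinear (fun _ => hderiv t ht) (fun _ => hderiv t ht)
  · intro t ht
    have key : (fun n => (2 * x t n * x' t n / Real.sqrt ((x t n) ^ 2)) ^ 2)
        = fun n => 4 * (x' t n) ^ 2 := by
      funext n
      have hx := hpos t ht n
      rw [Real.sqrt_sq hx.le]
      field_simp
      ring
    rw [key]
    exact (hsum2 (x' t)).mul_left 4
  · intro t ht
    have key : (fun n => (2 * x t n * x' t n) ^ 2 / (x t n) ^ 2)
        = fun n => 4 * (x' t n) ^ 2 := by
      funext n
      have hx := (hpos t ht n).ne'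
      field_simp
      ring
    rw [key, tsum_mul_left, hnorm2 (x' t)]
    ring
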